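/- Let μ be a compactly supported probability measure on ℝ² that charges no line and whose support has non-empty interior. Define d_{χ,μ}(x,x′) = ∫_{(ℝ²)²} |χ(x,y,z) − χ(x′,y,z)| dμ(y)dμ(z) for x,x′ ∈ supp μ. Then d_{χ,μ} is a distance on supp μ, and the topology it induces on supp μ coincides with the topology induced by the Euclidean norm: a sequence (x_n) in supp μ converges to x ∈ supp μ for d_{χ,μ} if and only if it converges to x in Euclidean norm. -/

import Mathlib

open MeasureTheory Filter Topology
open scoped ENNReal NNReal

noncomputable section

/-- Points of the plane. -/
abbrev Pt : Type := ℝ × ℝ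

/-- The orientation of a triple of points: the sign of `det (q - p, r - p)`. -/
noncomputable def chi (p q r : Pt) : ℝ :=
  Real.sign ((q.1 - p.1) * (r.2 - p.2) - (q.2 - p.2) * (r.1 - p.1))

/-- Affine lines of the plane. -/
def IsAffineLine (L : Set Pt) : Prop :=
  ∃ p v : Pt, v ≠ 0 ∧ L = {x | ∃ t : ℝ, x = p + t • v}

/-- A measure charges no line. -/
def ChargesNoLine (μ : Measure Pt) : Prop :=
  ∀ L : Set Pt, IsAffineLine L → μ L = 0

/-- The (topological) support of a measure on the plane. -/
def msupport (μ : Measure Pt) : Set Pt :=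
  {x | ∀ U : Set Pt, IsOpen U → x ∈ U → 0 < μ U}

/-- The neighborhood pseudo-distance `d_{χ,μ}` associated to the chirotope kernel of a
measure `μ`. -/
noncomputable def dchi (μ : Measure Pt) (x x' : Pt) : ℝ :=
  ∫ p : Pt × Pt, |chi x p.1 p.2 - chi x' p.1 p.2| ∂(μ.prod μ)

-- helpers
def detf (a y z : Pt) : ℝ := (y.1 - a.1) * (z.2 - a.2) - (y.2 - a.2) * (z.1 - a.1)

lemma chi_eq (a y z : Pt) : chi a y z = Real.sign (detf a y z) := rfl

lemma measurable_realSign : Measurable Real.sign := by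
  unfold Real.sign
  exact Measurable.ite measurableSet_Iio measurable_const
    (Measurable.ite measurableSet_Ioi measurable_const measurable_const)

lemma continuous_detf (y z : Pt) : Continuous fun a : Pt => detf a y z := by
  unfold detf; fun_prop

lemma measurable_detf (a : Pt) : Measurable fun p : Pt × Pt => detf a p.1 p.2 := by
  unfold detf; fun_prop

lemma abs_sign_le (r : ℝ) : |Real.sign r| ≤ 1 := by
  rcases Real.sign_apply_eq r with h | h | h <;> rw [h] <;> norm_num

lemma chi_meas (a : Pt) : Measurable fun p : Pt × Pt => chi a p.1 p.2 :=
  measurable_realSign.comp (measurable_detf a)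

lemma integrable_chidiff (μ : Measure Pt) [IsProbabilityMeasure μ] (a b : Pt) :
    Integrable (fun p : Pt × Pt => |chi a p.1 p.2 - chi b p.1 p.2|) (μ.prod μ) := by
  have hm : Measurable fun p : Pt × Pt => |chi a p.1 p.2 - chi b p.1 p.2| :=
    ((chi_meas a).sub (chi_meas b)).abs
  refine (integrable_const (2:ℝ)).mono' hm.aestronglyMeasurable ?_
  refine Filter.Eventually.of_forall fun p => ?_
  rw [Real.norm_eq_abs, abs_abs]
  calc |chi a p.1 p.2 - chi b p.1 p.2| ≤ |chi a p.1 p.2| + |chi b p.1 p.2| := abs_sub _ _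
    _ ≤ 1 + 1 := add_le_add (abs_sign_le _) (abs_sign_le _)
    _ = 2 := by norm_num

lemma dchi_nonneg (μ : Measure Pt) (x x' : Pt) : 0 ≤ dchi μ x x' :=
  integral_nonneg fun _ => abs_nonneg _

lemma dchi_symm (μ : Measure Pt) (x x' : Pt) : dchi μ x x' = dchi μ x' x := by
  unfold dchi
  congr 1; funext p; exact abs_sub_comm _ _

lemma dchi_triangle (μ : Measure Pt) [IsProbabilityMeasure μ] (x y z : Pt) :
    dchi μ x z ≤ dchi μ x y + dchi μ y z := by
  unfold dchi
  rw [← integral_add (integrable_chidiff μ x y) (integrable_chidiff μ y z)]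
  exact integral_mono (integrable_chidiff μ x z)
    ((integrable_chidiff μ x y).add (integrable_chidiff μ y z))
    fun p => abs_sub_le _ _ _

lemma slice_line (x y : Pt) (hxy : y ≠ x) :
    {z : Pt | detf x y z = 0} = {z : Pt | ∃ t : ℝ, z = x + t • (y - x)} := by
  ext z
  simp only [Set.mem_setOf_eq, detf]
  constructor
  · intro h
    have h' : (y.1 - x.1) * (z.2 - x.2) = (y.2 - x.2) * (z.1 - x.1) := by linarith
    by_cases h1 : y.1 - x.1 = 0
    · have h2 : y.2 - x.2 ≠ 0 := by
        intro h2
        apply hxy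
        have e1 : y.1 = x.1 := by linarith
        have e2 : y.2 = x.2 := by linarith
        exact Prod.ext e1 e2
      refine ⟨(z.2 - x.2) / (y.2 - x.2), ?_⟩
      have hz1 : z.1 - x.1 = 0 := by
        have hmul : (y.2 - x.2) * (z.1 - x.1) = 0 := by
          rw [h1] at h'; linarith
        rcases mul_eq_zero.mp hmul with h'' | h''
        · exact absurd h'' h2
        · exact h''
      refine Prod.ext ?_ ?_
      · simp [Prod.fst_add, Prod.smul_fst, h1]; linarith
      · simp [Prod.snd_add, Prod.smul_snd]; field_simp; ring
    · refine ⟨(z.1 - x.1) / (y.1 - x.1), ?_⟩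
      refine Prod.ext ?_ ?_
      · simp [Prod.fst_add, Prod.smul_fst]; field_simp; ring
      · simp [Prod.snd_add, Prod.smul_snd]
        field_simp
        linarith [h']
  · rintro ⟨t, rfl⟩
    simp [Prod.fst_add, Prod.snd_add, Prod.smul_fst, Prod.smul_snd]
    ring

lemma line_null {μ : Measure Pt} (hline : ChargesNoLine μ) {p v : Pt} (hv : v ≠ 0) :
    μ {z : Pt | ∃ t : ℝ, z = p + t • v} = 0 :=
  hline _ ⟨p, v, hv, rfl⟩

lemma singleton_null {μ : Measure Pt} (hline : ChargesNoLine μ) (x : Pt) : μ {x} = 0 := by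
  refine measure_mono_null ?_
    (line_null hline (p := x) (v := ((1:ℝ), (0:ℝ))) (by norm_num [Prod.ext_iff]))
  intro z hz
  rcases hz with rfl
  exact ⟨0, by simp⟩

lemma collinear_null (μ : Measure Pt) [IsProbabilityMeasure μ] (hline : ChargesNoLine μ)
    (x : Pt) : (μ.prod μ) {p : Pt × Pt | detf x p.1 p.2 = 0} = 0 := by
  have hmeas : MeasurableSet {p : Pt × Pt | detf x p.1 p.2 = 0} :=
    (measurable_detf x) (measurableSet_singleton 0)
  rw [Measure.prod_apply hmeas]
  have hae : ∀ᵐ y ∂μ, μ (Prod.mk y ⁻¹' {p : Pt × Pt | detf x p.1 p.2 = 0}) = 0 := by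
    have hx : ∀ᵐ y ∂μ, y ≠ x := by
      rw [ae_iff]
      refine measure_mono_null ?_ (singleton_null hline x)
      intro y hy
      simpa using hy
    filter_upwards [hx] with y hy
    have hset : Prod.mk y ⁻¹' {p : Pt × Pt | detf x p.1 p.2 = 0} = {z : Pt | detf x y z = 0} :=
      rfl
    rw [hset, slice_line x y hy]
    exact line_null hline (sub_ne_zero.mpr hy)
  rw [lintegral_congr_ae hae]
  simp

lemma tendsto_sign {f : ℕ → ℝ} {t : ℝ} (ht : t ≠ 0) (hf : Tendsto f atTop (𝓝 t)) :
    Tendsto (fun n => Real.sign (f n)) atTop (𝓝 (Real.sign t)) := by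
  rcases ht.lt_or_gt with h | h
  · rw [Real.sign_of_neg h]
    have he : ∀ᶠ n in atTop, Real.sign (f n) = -1 :=
      (hf.eventually_lt_const h).mono fun n hn => Real.sign_of_neg hn
    exact Tendsto.congr' (he.mono fun n hn => hn.symm) tendsto_const_nhds
  · rw [Real.sign_of_pos h]
    have he : ∀ᶠ n in atTop, Real.sign (f n) = 1 :=
      (hf.eventually_const_lt h).mono fun n hn => Real.sign_of_pos hn
    exact Tendsto.congr' (he.mono fun n hn => hn.symm) tendsto_const_nhds

lemma dchi_tendsto_zero (μ : Measure Pt) [IsProbabilityMeasure μ] (hline : ChargesNoLine μ)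
    {xs : ℕ → Pt} {x : Pt} (hx : Tendsto xs atTop (𝓝 x)) :
    Tendsto (fun n => dchi μ (xs n) x) atTop (𝓝 0) := by
  have hlim : ∀ᵐ p ∂(μ.prod μ), Tendsto
      (fun n => |chi (xs n) p.1 p.2 - chi x p.1 p.2|) atTop (𝓝 0) := by
    have hne : ∀ᵐ p ∂(μ.prod μ), detf x p.1 p.2 ≠ 0 := by
      rw [ae_iff]
      refine measure_mono_null ?_ (collinear_null μ hline x)
      intro p hp
      simpa using hp
    filter_upwards [hne] with p hp
    have hdet : Tendsto (fun n => detf (xs n) p.1 p.2) atTop (𝓝 (detf x p.1 p.2)) :=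
      ((continuous_detf p.1 p.2).tendsto x).comp hx
    have hsgn : Tendsto (fun n => chi (xs n) p.1 p.2) atTop (𝓝 (chi x p.1 p.2)) := by
      simp only [chi_eq]
      exact tendsto_sign hp hdet
    have := (hsgn.sub (tendsto_const_nhds (x := chi x p.1 p.2))).abs
    simpa using this
  have hmain := tendsto_integral_of_dominated_convergence (μ := μ.prod μ)
    (F := fun n p => |chi (xs n) p.1 p.2 - chi x p.1 p.2|) (f := fun _ => (0:ℝ))
    (fun _ => (2:ℝ))
    (fun n => (((chi_meas (xs n)).sub (chi_meas x)).abs).aestronglyMeasurable)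
    (integrable_const 2)
    (fun n => Eventually.of_forall fun p => by
      rw [Real.norm_eq_abs, abs_abs]
      calc |chi (xs n) p.1 p.2 - chi x p.1 p.2| ≤ |chi (xs n) p.1 p.2| + |chi x p.1 p.2| :=
            abs_sub _ _
        _ ≤ 1 + 1 := add_le_add (abs_sign_le _) (abs_sign_le _)
        _ = 2 := by norm_num)
    hlim
  simpa [dchi] using hmain

lemma continuous_detf2 (a : Pt) : Continuous fun p : Pt × Pt => detf a p.1 p.2 := by
  unfold detf; fun_prop

lemma dchi_pos (μ : Measure Pt) [IsProbabilityMeasure μ]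
    (hi : (interior (msupport μ)).Nonempty) {x x' : Pt} (hne : x ≠ x') :
    0 < dchi μ x x' := by
  obtain ⟨c, hc⟩ := hi
  obtain ⟨r, hr, hB⟩ := Metric.isOpen_iff.mp isOpen_interior c hc
  set D : ℝ := detf x x' c with hD
  set K : ℝ := |x'.1 - x.1| + |x'.2 - x.2| + 1 with hK
  have hKpos : (0:ℝ) < K := by rw [hK]; positivity
  set s : ℝ := if D = 0 then r / (4 * K) else 0 with hs
  have hs_nonneg : 0 ≤ s := by rw [hs]; split <;> positivity
  have hsbound : s * K ≤ r / 4 := by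
    rw [hs]; split
    · have he : r / (4 * K) * K = r / 4 := by field_simp
      linarith
    · rw [zero_mul]; positivity
  set c' : Pt := (c.1 - s * (x'.2 - x.2), c.2 + s * (x'.1 - x.1)) with hc'
  have hdistc : dist c' c ≤ r / 4 := by
    rw [Prod.dist_eq]
    apply max_le
    · rw [Real.dist_eq, hc']
      have e : (c.1 - s * (x'.2 - x.2), c.2 + s * (x'.1 - x.1)).1 - c.1
          = -(s * (x'.2 - x.2)) := by simp
      rw [e, abs_neg, abs_mul, abs_of_nonneg hs_nonneg]
      calc s * |x'.2 - x.2| ≤ s * K := by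
            rw [hK]
            apply mul_le_mul_of_nonneg_left _ hs_nonneg
            have := abs_nonneg (x'.1 - x.1)
            linarith
        _ ≤ r / 4 := hsbound
    · rw [Real.dist_eq, hc']
      have e : (c.1 - s * (x'.2 - x.2), c.2 + s * (x'.1 - x.1)).2 - c.2
          = s * (x'.1 - x.1) := by simp
      rw [e, abs_mul, abs_of_nonneg hs_nonneg]
      calc s * |x'.1 - x.1| ≤ s * K := by
            rw [hK]
            apply mul_le_mul_of_nonneg_left _ hs_nonneg
            have := abs_nonneg (x'.2 - x.2)
            linarith
        _ ≤ r / 4 := hsbound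
  have hc'B : c' ∈ Metric.ball c r := by
    rw [Metric.mem_ball]
    linarith
  set D' : ℝ := detf x x' c' with hD'
  have hD'val : D' = D + s * ((x'.1 - x.1) ^ 2 + (x'.2 - x.2) ^ 2) := by
    rw [hD', hD, hc']
    simp [detf]
    ring
  have hvpos : 0 < (x'.1 - x.1) ^ 2 + (x'.2 - x.2) ^ 2 := by
    rcases Prod.ext_iff.not.mp hne with h
    by_cases h1 : x.1 = x'.1
    · have h2 : x.2 ≠ x'.2 := fun h2 => h ⟨h1, h2⟩
      have : (x'.2 - x.2) ^ 2 > 0 := by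
        have : x'.2 - x.2 ≠ 0 := sub_ne_zero.mpr (Ne.symm h2)
        positivity
      nlinarith [sq_nonneg (x'.1 - x.1)]
    · have : (x'.1 - x.1) ^ 2 > 0 := by
        have : x'.1 - x.1 ≠ 0 := sub_ne_zero.mpr (Ne.symm h1)
        positivity
      nlinarith [sq_nonneg (x'.2 - x.2)]
  have hD'ne : D' ≠ 0 := by
    by_cases hD0 : D = 0
    · have hspos : 0 < s := by rw [hs, if_pos hD0]; positivity
      rw [hD'val, hD0, zero_add]
      exact (mul_pos hspos hvpos).ne'
    · rw [hD'val, hs, if_neg hD0, zero_mul, add_zero]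
      exact hD0
  set m : Pt := ((x.1 + x'.1) / 2, (x.2 + x'.2) / 2) with hm
  set L : ℝ := |m.1 - c'.1| + |m.2 - c'.2| + 1 with hL
  have hLpos : (0:ℝ) < L := by rw [hL]; positivity
  set t : ℝ := r / (4 * L) with ht
  have htpos : 0 < t := by rw [ht]; positivity
  have htbound : t * L ≤ r / 4 := by
    rw [ht]
    have he : r / (4 * L) * L = r / 4 := by field_simp
    linarith
  set z₀ : Pt := (c'.1 + t * (m.1 - c'.1), c'.2 + t * (m.2 - c'.2)) with hz₀
  have hdistz : dist z₀ c' ≤ r / 4 := by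
    rw [Prod.dist_eq]
    apply max_le
    · rw [Real.dist_eq, hz₀]
      have e : (c'.1 + t * (m.1 - c'.1), c'.2 + t * (m.2 - c'.2)).1 - c'.1
          = t * (m.1 - c'.1) := by simp
      rw [e, abs_mul, abs_of_nonneg htpos.le]
      calc t * |m.1 - c'.1| ≤ t * L := by
            rw [hL]
            apply mul_le_mul_of_nonneg_left _ htpos.le
            have := abs_nonneg (m.2 - c'.2)
            linarith
        _ ≤ r / 4 := htbound
    · rw [Real.dist_eq, hz₀]
      have e : (c'.1 + t * (m.1 - c'.1), c'.2 + t * (m.2 - c'.2)).2 - c'.2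
          = t * (m.2 - c'.2) := by simp
      rw [e, abs_mul, abs_of_nonneg htpos.le]
      calc t * |m.2 - c'.2| ≤ t * L := by
            rw [hL]
            apply mul_le_mul_of_nonneg_left _ htpos.le
            have := abs_nonneg (m.1 - c'.1)
            linarith
        _ ≤ r / 4 := htbound
  have hz₀B : z₀ ∈ Metric.ball c r := by
    rw [Metric.mem_ball]
    calc dist z₀ c ≤ dist z₀ c' + dist c' c := dist_triangle _ _ _
      _ ≤ r / 4 + r / 4 := add_le_add hdistz hdistc
      _ < r := by linarith
  have key1 : detf x c' z₀ = -(t / 2) * D' := by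
    rw [hz₀, hD', hm, hc']
    simp [detf]
    ring
  have key2 : detf x' c' z₀ = (t / 2) * D' := by
    rw [hz₀, hD', hm, hc']
    simp [detf]
    ring
  have hprodneg : detf x c' z₀ * detf x' c' z₀ < 0 := by
    rw [key1, key2]
    have h : t / 2 * D' ≠ 0 := mul_ne_zero (by positivity) hD'ne
    nlinarith [mul_self_pos.mpr h]
  set S : Set (Pt × Pt) := (Metric.ball c r ×ˢ Metric.ball c r) ∩
    {p : Pt × Pt | detf x p.1 p.2 * detf x' p.1 p.2 < 0} with hS
  have hSopen : IsOpen S :=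
    (Metric.isOpen_ball.prod Metric.isOpen_ball).inter
      (isOpen_lt ((continuous_detf2 x).mul (continuous_detf2 x')) continuous_const)
  have hmemS : (c', z₀) ∈ S := ⟨⟨hc'B, hz₀B⟩, hprodneg⟩
  obtain ⟨U, V, hUo, hVo, hc'U, hz₀V, hUVsub⟩ := isOpen_prod_iff.mp hSopen c' z₀ hmemS
  have hc'supp : c' ∈ msupport μ := interior_subset (hB hc'B)
  have hz₀supp : z₀ ∈ msupport μ := interior_subset (hB hz₀B)
  have hμU : 0 < μ U := hc'supp U hUo hc'U
  have hμV : 0 < μ V := hz₀supp V hVo hz₀V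
  have hub : ∀ p ∈ U ×ˢ V, (2:ℝ) ≤ |chi x p.1 p.2 - chi x' p.1 p.2| := by
    intro p hp
    have hneg : detf x p.1 p.2 * detf x' p.1 p.2 < 0 := (hUVsub hp).2
    rcases mul_neg_iff.mp hneg with ⟨h1, h2⟩ | ⟨h1, h2⟩
    · rw [chi_eq, chi_eq, Real.sign_of_pos h1, Real.sign_of_neg h2]; norm_num
    · rw [chi_eq, chi_eq, Real.sign_of_neg h1, Real.sign_of_pos h2]; norm_num
  have hUVm : MeasurableSet (U ×ˢ V) := hUo.measurableSet.prod hVo.measurableSet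
  have hint := integrable_chidiff μ x x'
  have h1 : 2 * ((μ.prod μ) (U ×ˢ V)).toReal
      ≤ ∫ p in U ×ˢ V, |chi x p.1 p.2 - chi x' p.1 p.2| ∂(μ.prod μ) :=
    by
      have := setIntegral_ge_of_const_le hUVm (measure_ne_top _ _) hub hint.integrableOn
      rw [smul_eq_mul, mul_comm] at this
      exact this
  have h2 : (∫ p in U ×ˢ V, |chi x p.1 p.2 - chi x' p.1 p.2| ∂(μ.prod μ)) ≤ dchi μ x x' :=
    setIntegral_le_integral hint (Eventually.of_forall fun p => abs_nonneg _)
  have hpos : 0 < ((μ.prod μ) (U ×ˢ V)).toReal := by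
    apply ENNReal.toReal_pos _ (measure_ne_top _ _)
    rw [Measure.prod_prod]
    exact (ENNReal.mul_pos hμU.ne' hμV.ne').ne'
  linarith

theorem stmt_13 (μ : Measure Pt) [IsProbabilityMeasure μ]
    (hcomp : IsCompact (msupport μ)) (hline : ChargesNoLine μ)
    (hi : (interior (msupport μ)).Nonempty) :
    ((∀ x x' : Pt, 0 ≤ dchi μ x x') ∧
     (∀ x x' : Pt, dchi μ x x' = dchi μ x' x) ∧
     (∀ x y z : Pt, dchi μ x z ≤ dchi μ x y + dchi μ y z) ∧
     (∀ x ∈ msupport μ, ∀ x' ∈ msupport μ, dchi μ x x' = 0 → x = x')) ∧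
    ∀ (xs : ℕ → Pt) (x : Pt), (∀ n, xs n ∈ msupport μ) → x ∈ msupport μ →
      (Tendsto (fun n => dchi μ (xs n) x) atTop (nhds 0) ↔
        Tendsto xs atTop (nhds x)) := by
  constructor
  · refine ⟨dchi_nonneg μ, dchi_symm μ, dchi_triangle μ, ?_⟩
    intro x _hx x' _hx' h0
    by_contra hne
    exact absurd h0 (dchi_pos μ hi hne).ne'
  · intro xs x hxs _hx
    constructor
    · intro hd
      refine tendsto_of_subseq_tendsto fun ns hns => ?_
      obtain ⟨x'', _hx''supp, ms, hms, hlim⟩ := hcomp.tendsto_subseq (fun n => hxs (ns n))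
      have hsub : Tendsto (fun k => ns (ms k)) atTop atTop := hns.comp hms.tendsto_atTop
      have h1 : Tendsto (fun k => dchi μ (xs (ns (ms k))) x) atTop (𝓝 0) := hd.comp hsub
      have hlim' : Tendsto (fun k => xs (ns (ms k))) atTop (𝓝 x'') := hlim
      have h2 : Tendsto (fun k => dchi μ (xs (ns (ms k))) x'') atTop (𝓝 0) :=
        dchi_tendsto_zero μ hline hlim'
      have hzero : dchi μ x'' x = 0 := by
        have hle : dchi μ x'' x ≤ 0 := by
          have hsum : Tendsto (fun k => dchi μ (xs (ns (ms k))) x''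
              + dchi μ (xs (ns (ms k))) x) atTop (𝓝 0) := by
            simpa using h2.add h1
          refine ge_of_tendsto hsum (Eventually.of_forall fun k => ?_)
          calc dchi μ x'' x ≤ dchi μ x'' (xs (ns (ms k))) + dchi μ (xs (ns (ms k))) x :=
                dchi_triangle μ _ _ _
            _ = dchi μ (xs (ns (ms k))) x'' + dchi μ (xs (ns (ms k))) x := by
                rw [dchi_symm]
        linarith [dchi_nonneg μ x'' x]
      have hxx : x'' = x := by
        by_contra hne
        exact absurd hzero (dchi_pos μ hi hne).ne'
      exact ⟨ms, hxx ▸ hlim'⟩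
    · intro h
      exact dchi_tendsto_zero μ hline h

end
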